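/- arXiv:2107.00669 — 2 statements merged into one kernel-verified Lean document; each statement's English description precedes it below -/
import Mathlib

section
/- The Cartan–Serre map CS : C(□^n) → C(Δ^n) is a chain map, i.e., for every n ≥ 0 and every basis element x of C(□^n) one has ∂(CS(x)) = CS(∂x). -/
/-- The three cells of the interval: `[0]`, `[0,1]` (written `mid`), and `[1]`. -/
inductive CubeF : Type
  | zero : CubeF
  | mid : CubeF
  | one : CubeF
  deriving DecidableEq

namespace CartanSerre

/-- Basis elements of the cubical chain complex `C(□^n)`: tensors `x_1 ⊗ ⋯ ⊗ x_n`. -/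
abbrev CubeB (n : ℕ) := Fin n → CubeF
/-- The cubical chain complex `C(□^n)` (as the free ℤ-module on its basis). -/
abbrev CubeChain (n : ℕ) := CubeB n →₀ ℤ
/-- `C(□^n) ⊗ C(□^n)`, modeled as the free ℤ-module on pairs of basis elements. -/
abbrev CubeChain2 (n : ℕ) := (CubeB n × CubeB n) →₀ ℤ
/-- Basis elements of `C(Δ^n)`: strictly increasing tuples `[v_0, …, v_m]` with
`v_i ∈ {0,…,n}`, i.e. nonempty finite subsets of `Fin (n+1)` (`∅` is not used). -/
abbrev SimpB (n : ℕ) := Finset (Fin (n + 1))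
/-- The normalized simplicial chain complex `C(Δ^n)`. -/
abbrev SimpChain (n : ℕ) := SimpB n →₀ ℤ
/-- `C(Δ^n) ⊗ C(Δ^n)`. -/
abbrev SimpChain2 (n : ℕ) := (SimpB n × SimpB n) →₀ ℤ

/-- Degree of a cubical basis element: the number of factors equal to `[0,1]`. -/
def cubeDeg {n : ℕ} (x : CubeB n) : ℕ :=
  (Finset.univ.filter fun i => x i = CubeF.mid).card

/-- Degree of a simplicial basis element `[v_0, …, v_m]`, namely `m`. -/
def simpDeg {n : ℕ} (s : SimpB n) : ℕ := s.card - 1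

/-- The cubical boundary on a basis element. -/
noncomputable def cubeBdFun (n : ℕ) (x : CubeB n) : CubeChain n :=
  ∑ i ∈ Finset.univ.filter (fun i => x i = CubeF.mid),
    ((-1 : ℤ) ^ (Finset.univ.filter fun j => j < i ∧ x j = CubeF.mid).card) •
      (Finsupp.single (Function.update x i CubeF.one) 1 -
        Finsupp.single (Function.update x i CubeF.zero) 1)

/-- The cubical boundary `∂ : C(□^n) → C(□^n)`. -/
noncomputable def cubeBd (n : ℕ) : CubeChain n →ₗ[ℤ] CubeChain n :=
  Finsupp.lift (CubeChain n) ℤ (CubeB n) (cubeBdFun n)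

/-- The (normalized) simplicial boundary on a basis element. -/
noncomputable def simpBdFun (n : ℕ) (s : SimpB n) : SimpChain n :=
  if 2 ≤ s.card then
    ∑ v ∈ s, ((-1 : ℤ) ^ (s.filter fun w => w < v).card) • Finsupp.single (s.erase v) 1
  else 0

/-- The simplicial boundary `∂ : C(Δ^n) → C(Δ^n)`. -/
noncomputable def simpBd (n : ℕ) : SimpChain n →ₗ[ℤ] SimpChain n :=
  Finsupp.lift (SimpChain n) ℤ (SimpB n) (simpBdFun n)

/-- `p(x) - 1` (0-indexed): the first position of a factor `[0]`, or `n` if there is none. -/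
def pIdx {n : ℕ} (x : CubeB n) : Fin (n + 1) :=
  ⟨(List.ofFn x).findIdx (fun c => decide (c = CubeF.zero)), by
    have h : (List.ofFn x).findIdx (fun c => decide (c = CubeF.zero)) ≤ (List.ofFn x).length :=
      List.findIdx_le_length
    simp only [List.length_ofFn] at h
    omega⟩

/-- The vertex set `[q_1 - 1, …, q_m - 1, p(x) - 1]` of the image of `x` under `CS`. -/
def csSet {n : ℕ} (x : CubeB n) : SimpB n :=
  insert (pIdx x) ((Finset.univ.filter fun i => x i = CubeF.mid).image Fin.castSucc)

/-- The Cartan–Serre map `CS` on a cubical basis element. -/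
noncomputable def csFun (n : ℕ) (x : CubeB n) : SimpChain n :=
  if ∃ i j : Fin n, i < j ∧ x i = CubeF.zero ∧ x j = CubeF.mid then 0
  else Finsupp.single (csSet x) 1

/-- The Cartan–Serre chain map `CS : C(□^n) → C(Δ^n)`. -/
noncomputable def csL (n : ℕ) : CubeChain n →ₗ[ℤ] SimpChain n :=
  Finsupp.lift (SimpChain n) ℤ (CubeB n) (csFun n)

/-- The cubical counit `ε_□ : C(□^n) → ℤ`. -/
noncomputable def cubeEps (n : ℕ) : CubeChain n →ₗ[ℤ] ℤ :=
  Finsupp.lift ℤ ℤ (CubeB n) (fun x => if cubeDeg x = 0 then (1 : ℤ) else 0)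

/-- The simplicial counit `ε_Δ : C(Δ^n) → ℤ`. -/
noncomputable def simpEps (n : ℕ) : SimpChain n →ₗ[ℤ] ℤ :=
  Finsupp.lift ℤ ℤ (SimpB n) (fun s => if s.card = 1 then (1 : ℤ) else 0)

/-- Tensor product of two elements of free modules, in the product-basis model. -/
noncomputable def tensorF {α β : Type*} (a : α →₀ ℤ) (b : β →₀ ℤ) : (α × β) →₀ ℤ :=
  a.sum fun i r => b.sum fun j s => Finsupp.single (i, j) (r * s)

/-- Left factor of the Serre diagonal summand indexed by `S`:
factors in `S` contribute `[0,1]`, the other `[0,1]`-factors contribute `[0]`. -/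
def serreL {n : ℕ} (x : CubeB n) (S : Finset (Fin n)) : CubeB n := fun i =>
  if x i = CubeF.mid then (if i ∈ S then CubeF.mid else CubeF.zero) else x i

/-- Right factor of the Serre diagonal summand indexed by `S`. -/
def serreR {n : ℕ} (x : CubeB n) (S : Finset (Fin n)) : CubeB n := fun i =>
  if x i = CubeF.mid then (if i ∈ S then CubeF.one else CubeF.mid) else x i

/-- Koszul sign exponent of the Serre diagonal summand indexed by `S`. -/
def serreSign {n : ℕ} (x : CubeB n) (S : Finset (Fin n)) : ℕ :=
  ((Finset.univ : Finset (Fin n × Fin n)).filter fun p =>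
    p.1 < p.2 ∧ x p.1 = CubeF.mid ∧ p.1 ∉ S ∧ p.2 ∈ S).card

/-- The Serre diagonal `Δ_□` on a basis element: the tensor product (with Koszul
signs) of `Δ[0] = [0]⊗[0]`, `Δ[1] = [1]⊗[1]`, `Δ[0,1] = [0]⊗[0,1] + [0,1]⊗[1]`. -/
noncomputable def serreDiagFun (n : ℕ) (x : CubeB n) : CubeChain2 n :=
  ∑ S ∈ (Finset.univ.filter fun i => x i = CubeF.mid).powerset,
    ((-1 : ℤ) ^ serreSign x S) • Finsupp.single (serreL x S, serreR x S) 1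

/-- The Serre diagonal `Δ_□ : C(□^n) → C(□^n) ⊗ C(□^n)`. -/
noncomputable def serreDiag (n : ℕ) : CubeChain n →ₗ[ℤ] CubeChain2 n :=
  Finsupp.lift (CubeChain2 n) ℤ (CubeB n) (serreDiagFun n)

/-- The Alexander–Whitney coproduct on a basis element:
`Δ_AW [v_0,…,v_m] = Σ_i [v_0,…,v_i] ⊗ [v_i,…,v_m]`. -/
noncomputable def awFun (n : ℕ) (s : SimpB n) : SimpChain2 n :=
  ∑ v ∈ s, Finsupp.single (s.filter fun w => w ≤ v, s.filter fun w => v ≤ w) 1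

/-- The Alexander–Whitney coproduct `Δ_AW : C(Δ^n) → C(Δ^n) ⊗ C(Δ^n)`. -/
noncomputable def awDiag (n : ℕ) : SimpChain n →ₗ[ℤ] SimpChain2 n :=
  Finsupp.lift (SimpChain2 n) ℤ (SimpB n) (awFun n)

/-- `CS ⊗ CS : C(□^n) ⊗ C(□^n) → C(Δ^n) ⊗ C(Δ^n)` (no Koszul signs: `CS` has degree 0). -/
noncomputable def cs2L (n : ℕ) : CubeChain2 n →ₗ[ℤ] SimpChain2 n :=
  Finsupp.lift (SimpChain2 n) ℤ (CubeB n × CubeB n)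
    (fun p => tensorF (csFun n p.1) (csFun n p.2))

/-- The join on single cube factors: `[0] ∗ [1] = [0,1]`, `[1] ∗ [0] = -[0,1]`,
all other joins of basis elements vanish (the outcome factor being `[0,1]`). -/
def joinF : CubeF → CubeF → ℤ
  | CubeF.zero, CubeF.one => 1
  | CubeF.one, CubeF.zero => -1
  | _, _ => 0

/-- The cubical join `∗` on basis elements. -/
noncomputable def cubeJoinFun (n : ℕ) (x y : CubeB n) : CubeChain n :=
  ((-1 : ℤ) ^ cubeDeg x) •
    ∑ l : Fin n,
      ((if (∀ j, j < l → y j ≠ CubeF.mid) ∧ (∀ j, l < j → x j ≠ CubeF.mid) then (1 : ℤ) else 0) *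
          joinF (x l) (y l)) •
        Finsupp.single (fun j => if j < l then x j else if j = l then CubeF.mid else y j) 1

/-- The cubical join, extended bilinearly to chains. -/
noncomputable def cubeJoinC (n : ℕ) (a b : CubeChain n) : CubeChain n :=
  a.sum fun x r => b.sum fun y s => (r * s) • cubeJoinFun n x y

/-- The simplicial join `∗` on basis elements: `0` if the vertex sets meet, and
otherwise `(-1)^{p + |σ|}` times the union, `|σ|` counting the inversions. -/
noncomputable def simpJoinFun (n : ℕ) (s t : SimpB n) : SimpChain n :=
  if s ∩ t = ∅ ∧ s.Nonempty ∧ t.Nonempty then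
    ((-1 : ℤ) ^ ((s.card - 1) + ((s ×ˢ t).filter fun p => p.2 < p.1).card)) •
      Finsupp.single (s ∪ t) 1
  else 0

/-- The simplicial join, extended bilinearly to chains. -/
noncomputable def simpJoinC (n : ℕ) (a b : SimpChain n) : SimpChain n :=
  a.sum fun s r => b.sum fun t u => (r * u) • simpJoinFun n s t

/-- The linear order `[0] < [0,1] < [1]` on interval cells, via `0 < 1 < 2`. -/
def cellVal : CubeF → ℕ
  | CubeF.zero => 0
  | CubeF.mid => 1
  | CubeF.one => 2

/-- The componentwise partial order on cubical basis elements,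
with `[0] < [0,1] < [1]` on each factor. -/
def cubeLe {n : ℕ} (x y : CubeB n) : Prop := ∀ i, cellVal (x i) ≤ cellVal (y i)

/-- Left-parenthesized iterated join of a nonempty list (the base case `[]` is junk). -/
noncomputable def foldJoin {C : Type*} (join : C → C → C) (z : C) : List C → C
  | [] => z
  | a :: l => l.foldl join a

/-- Left-parenthesized iterated cubical join `∗^{k}` of `k+1` basis elements. -/
noncomputable def iterCubeJoin (n k : ℕ) (f : Fin (k + 1) → CubeB n) : CubeChain n :=
  foldJoin (cubeJoinC n) 0 (List.ofFn fun i : Fin (k + 1) => (Finsupp.single (f i) 1 : CubeChain n))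

/-- Left-parenthesized iterated simplicial join `∗^{k}` of `k+1` chains. -/
noncomputable def iterSimpJoin (n k : ℕ) (g : Fin (k + 1) → SimpChain n) : SimpChain n :=
  foldJoin (simpJoinC n) 0 (List.ofFn g)

/-- The iterated Serre diagonal `Δ_□^k` on a basis element, with `k+1` output factors
(iterated on the last factor; this is unambiguous by coassociativity, and no Koszul
signs appear since `Δ_□` has degree `0`). -/
noncomputable def serreIterFun (n : ℕ) : (k : ℕ) → CubeB n → ((Fin (k + 1) → CubeB n) →₀ ℤ)
  | 0, x => Finsupp.single (fun _ => x) 1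
  | k + 1, x =>
    (serreIterFun n k x).sum fun f c =>
      (serreDiagFun n (f (Fin.last k))).sum fun p d =>
        Finsupp.single
          (fun i : Fin (k + 2) =>
            if h : (i : ℕ) < k then f ⟨(i : ℕ), by omega⟩
            else if (i : ℕ) = k then p.1 else p.2) (c * d)

/-- The iterated Serre diagonal `Δ_□^k : C(□^n) → C(□^n)^{⊗(k+1)}`. -/
noncomputable def serreIter (n k : ℕ) : CubeChain n →ₗ[ℤ] ((Fin (k + 1) → CubeB n) →₀ ℤ) :=
  Finsupp.lift _ ℤ (CubeB n) (serreIterFun n k)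

/-- The iterated Alexander–Whitney coproduct `Δ_AW^k` on a basis element. -/
noncomputable def awIterFun (n : ℕ) : (k : ℕ) → SimpB n → ((Fin (k + 1) → SimpB n) →₀ ℤ)
  | 0, s => Finsupp.single (fun _ => s) 1
  | k + 1, s =>
    (awIterFun n k s).sum fun f c =>
      (awFun n (f (Fin.last k))).sum fun p d =>
        Finsupp.single
          (fun i : Fin (k + 2) =>
            if h : (i : ℕ) < k then f ⟨(i : ℕ), by omega⟩
            else if (i : ℕ) = k then p.1 else p.2) (c * d)

/-- The iterated Alexander–Whitney coproduct `Δ_AW^k : C(Δ^n) → C(Δ^n)^{⊗(k+1)}`. -/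
noncomputable def awIter (n k : ℕ) : SimpChain n →ₗ[ℤ] ((Fin (k + 1) → SimpB n) →₀ ℤ) :=
  Finsupp.lift _ ℤ (SimpB n) (awIterFun n k)

/-- The action of a permutation `τ` on a `k`-fold tensor of basis elements,
with the Koszul sign determined by the degrees of the factors it transposes. -/
noncomputable def koszulPermFun {α : Type*} (deg : α → ℕ) {k : ℕ} (τ : Equiv.Perm (Fin k))
    (f : Fin k → α) : (Fin k → α) →₀ ℤ :=
  ((-1 : ℤ) ^ ∑ p ∈ (Finset.univ : Finset (Fin k × Fin k)).filter
      (fun p => p.1 < p.2 ∧ τ p.2 < τ p.1), deg (f (τ p.1)) * deg (f (τ p.2))) •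
    Finsupp.single (fun i => f (τ i)) 1

/-- The action of a permutation on `k`-fold tensors, with Koszul signs. -/
noncomputable def koszulPerm {α : Type*} (deg : α → ℕ) {k : ℕ} (τ : Equiv.Perm (Fin k)) :
    ((Fin k → α) →₀ ℤ) →ₗ[ℤ] ((Fin k → α) →₀ ℤ) :=
  Finsupp.lift _ ℤ (Fin k → α) (koszulPermFun deg τ)

/-- Tensor product of an `r`-tuple of elements of a free module, product-basis model. -/
noncomputable def tensorPi {r : ℕ} {α : Type*} [DecidableEq α] (c : Fin r → (α →₀ ℤ)) :
    (Fin r → α) →₀ ℤ :=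
  ∑ g ∈ Fintype.piFinset (fun i => (c i).support), Finsupp.single g (∏ i, (c i) (g i))

/-- `CS^{⊗ r} : C(□^n)^{⊗ r} → C(Δ^n)^{⊗ r}` (no Koszul signs: `CS` has degree 0). -/
noncomputable def csTensor (n r : ℕ) : ((Fin r → CubeB n) →₀ ℤ) →ₗ[ℤ] ((Fin r → SimpB n) →₀ ℤ) :=
  Finsupp.lift _ ℤ (Fin r → CubeB n) (fun f => tensorPi fun i => csFun n (f i))

/-- The index in `Fin (k_1 + ⋯ + k_r)` of the `j`-th tensor factor of the `i`-th block. -/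
def blockIdx {r : ℕ} (K : Fin r → ℕ) {m : ℕ} (hm : m + 1 = ∑ i, K i) (i : Fin r)
    (j : Fin (K i)) : Fin (m + 1) :=
  ⟨(∑ j' ∈ Finset.univ.filter (fun j' => j' < i), K j') + (j : ℕ), by
    have h2 : (j : ℕ) < K i := j.isLt
    have h3 : K i + ∑ j' ∈ Finset.univ.filter (fun j' => j' < i), K j' ≤ ∑ i', K i' := by
      rw [← Finset.sum_insert (a := i) (s := Finset.univ.filter (fun j' => j' < i)) (by simp)]
      exact Finset.sum_le_sum_of_subset (Finset.subset_univ _)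
    omega⟩

/-- A `(k_1, …, k_r)`-shuffle: a permutation increasing on each block. -/
def IsShuffle {r : ℕ} (K : Fin r → ℕ) {m : ℕ} (hm : m + 1 = ∑ i, K i)
    (σ : Equiv.Perm (Fin (m + 1))) : Prop :=
  ∀ (i : Fin r) (j j' : Fin (K i)), j < j' → σ (blockIdx K hm i j) < σ (blockIdx K hm i j')

/-- Total degree of the `i`-th block of a `k`-fold cubical tensor. -/
def cubeBlockDeg {n r : ℕ} (K : Fin r → ℕ) {m : ℕ} (hm : m + 1 = ∑ i, K i)
    (f : Fin (m + 1) → CubeB n) (i : Fin r) : ℕ :=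
  ∑ j : Fin (K i), cubeDeg (f (blockIdx K hm i j))

/-- Total degree of the `i`-th block of a `k`-fold simplicial tensor. -/
def simpBlockDeg {n r : ℕ} (K : Fin r → ℕ) {m : ℕ} (hm : m + 1 = ∑ i, K i)
    (f : Fin (m + 1) → SimpB n) (i : Fin r) : ℕ :=
  ∑ j : Fin (K i), simpDeg (f (blockIdx K hm i j))

/-- `∗^{k_1 - 1} ⊗ ⋯ ⊗ ∗^{k_r - 1}` on a cubical `k`-fold tensor basis element, with
the Koszul sign for applying the degree-`(k_i - 1)` maps across the earlier blocks. -/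
noncomputable def cubeBlockJoinFun (n r : ℕ) (K : Fin r → ℕ) {m : ℕ} (hm : m + 1 = ∑ i, K i)
    (f : Fin (m + 1) → CubeB n) : (Fin r → CubeB n) →₀ ℤ :=
  ((-1 : ℤ) ^ ∑ p ∈ (Finset.univ : Finset (Fin r × Fin r)).filter (fun p => p.1 < p.2),
      (K p.2 - 1) * cubeBlockDeg K hm f p.1) •
    tensorPi (fun i : Fin r =>
      foldJoin (cubeJoinC n) 0
        (List.ofFn fun j : Fin (K i) => (Finsupp.single (f (blockIdx K hm i j)) 1 : CubeChain n)))

/-- `∗^{k_1 - 1} ⊗ ⋯ ⊗ ∗^{k_r - 1} : C(□^n)^{⊗ k} → C(□^n)^{⊗ r}`. -/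
noncomputable def cubeBlockJoin (n r : ℕ) (K : Fin r → ℕ) {m : ℕ} (hm : m + 1 = ∑ i, K i) :
    ((Fin (m + 1) → CubeB n) →₀ ℤ) →ₗ[ℤ] ((Fin r → CubeB n) →₀ ℤ) :=
  Finsupp.lift _ ℤ (Fin (m + 1) → CubeB n) (cubeBlockJoinFun n r K hm)

/-- `∗^{k_1 - 1} ⊗ ⋯ ⊗ ∗^{k_r - 1}` on a simplicial `k`-fold tensor basis element. -/
noncomputable def simpBlockJoinFun (n r : ℕ) (K : Fin r → ℕ) {m : ℕ} (hm : m + 1 = ∑ i, K i)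
    (f : Fin (m + 1) → SimpB n) : (Fin r → SimpB n) →₀ ℤ :=
  ((-1 : ℤ) ^ ∑ p ∈ (Finset.univ : Finset (Fin r × Fin r)).filter (fun p => p.1 < p.2),
      (K p.2 - 1) * simpBlockDeg K hm f p.1) •
    tensorPi (fun i : Fin r =>
      foldJoin (simpJoinC n) 0
        (List.ofFn fun j : Fin (K i) => (Finsupp.single (f (blockIdx K hm i j)) 1 : SimpChain n)))

/-- `∗^{k_1 - 1} ⊗ ⋯ ⊗ ∗^{k_r - 1} : C(Δ^n)^{⊗ k} → C(Δ^n)^{⊗ r}`. -/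
noncomputable def simpBlockJoin (n r : ℕ) (K : Fin r → ℕ) {m : ℕ} (hm : m + 1 = ∑ i, K i) :
    ((Fin (m + 1) → SimpB n) →₀ ℤ) →ₗ[ℤ] ((Fin r → SimpB n) →₀ ℤ) :=
  Finsupp.lift _ ℤ (Fin (m + 1) → SimpB n) (simpBlockJoinFun n r K hm)

/-- A chain is homogeneous of degree `m` if its support is contained in degree-`m` basis elements. -/
def cubeHomog (n m : ℕ) (c : CubeChain n) : Prop := ∀ x ∈ c.support, cubeDeg x = m

/-- A simplicial chain is homogeneous of degree `m` if every basis element in its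
support is a strictly increasing tuple `[v_0, …, v_m]`, i.e. has `m+1` vertices. -/
def simpHomog (n m : ℕ) (c : SimpChain n) : Prop := ∀ s ∈ c.support, s.card = m + 1

end CartanSerre
namespace CartanSerre

open CubeF Finsupp

/-- Degeneracy predicate: some `[0]` factor occurs before some `[0,1]` factor. -/
def Degen {n : ℕ} (x : CubeB n) : Prop :=
  ∃ i j : Fin n, i < j ∧ x i = CubeF.zero ∧ x j = CubeF.mid

lemma pIdx_spec1 {n : ℕ} (x : CubeB n) (j : Fin n) (h : (j : ℕ) < (pIdx x : ℕ)) :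
    x j ≠ CubeF.zero := by
  intro hz
  have h' : (j : ℕ) < (List.ofFn x).findIdx (fun c => decide (c = CubeF.zero)) := h
  have := List.not_of_lt_findIdx h'
  simp [List.getElem_ofFn, hz] at this

lemma pIdx_spec2 {n : ℕ} (x : CubeB n) (h : (pIdx x : ℕ) < n) :
    x ⟨(pIdx x : ℕ), h⟩ = CubeF.zero := by
  have h' : (List.ofFn x).findIdx (fun c => decide (c = CubeF.zero)) < (List.ofFn x).length := by
    have h2 : (List.ofFn x).findIdx (fun c => decide (c = CubeF.zero)) < n := h
    simpa [List.length_ofFn] using h2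
  have := List.findIdx_getElem (w := h')
  simp [List.getElem_ofFn] at this
  exact this

lemma pIdx_eq {n : ℕ} (x : CubeB n) (k : Fin (n + 1))
    (h1 : ∀ j : Fin n, (j : ℕ) < (k : ℕ) → x j ≠ CubeF.zero)
    (h2 : ∀ h : (k : ℕ) < n, x ⟨(k : ℕ), h⟩ = CubeF.zero) : pIdx x = k := by
  have hle : (pIdx x : ℕ) ≤ n := by omega
  have hkle : (k : ℕ) ≤ n := by omega
  rcases lt_trichotomy ((pIdx x : ℕ)) ((k : ℕ)) with hlt | heq | hgt
  · exact absurd (pIdx_spec2 x (by omega)) (h1 ⟨(pIdx x : ℕ), by omega⟩ hlt)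
  · exact Fin.ext heq
  · exact absurd (h2 (by omega)) (pIdx_spec1 x ⟨(k : ℕ), by omega⟩ hgt)

end CartanSerre
namespace CartanSerre

open CubeF Finsupp

lemma csL_single {n : ℕ} (y : CubeB n) (c : ℤ) :
    csL n (Finsupp.single y c) = c • csFun n y := by
  simp [csL, Finsupp.lift_apply, Finsupp.sum_single_index]

lemma simpBd_single {n : ℕ} (s : SimpB n) :
    simpBd n (Finsupp.single s 1) = simpBdFun n s := by
  simp [simpBd, Finsupp.lift_apply, Finsupp.sum_single_index]

lemma csL_cubeBd {n : ℕ} (x : CubeB n) :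
    csL n (cubeBdFun n x) =
      ∑ i ∈ Finset.univ.filter (fun i => x i = CubeF.mid),
        ((-1 : ℤ) ^ (Finset.univ.filter fun j => j < i ∧ x j = CubeF.mid).card) •
          (csFun n (Function.update x i CubeF.one) - csFun n (Function.update x i CubeF.zero)) := by
  rw [cubeBdFun, map_sum]
  refine Finset.sum_congr rfl fun i _ => ?_
  rw [map_smul, map_sub, csL_single, csL_single, one_smul, one_smul]

lemma degen_key {n : ℕ} (x : CubeB n) (i : Fin n) (hi : x i = CubeF.mid) (hD : Degen x) :
    csFun n (Function.update x i CubeF.one) = csFun n (Function.update x i CubeF.zero) := by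
  obtain ⟨l, j, hlj, hl0, hjm⟩ := hD
  set y1 := Function.update x i CubeF.one with hy1
  set y0 := Function.update x i CubeF.zero with hy0
  have hy1i : y1 i = CubeF.one := Function.update_self i _ x
  have hy0i : y0 i = CubeF.zero := Function.update_self i _ x
  have hy1ne : ∀ a : Fin n, a ≠ i → y1 a = x a := fun a ha => Function.update_of_ne ha _ x
  have hy0ne : ∀ a : Fin n, a ≠ i → y0 a = x a := fun a ha => Function.update_of_ne ha _ x
  by_cases h1 : Degen y1
  · -- then y0 is also degenerate, both sides are 0
    obtain ⟨a, b, hab, ha, hb⟩ := h1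
    have hai : a ≠ i := by rintro rfl; rw [hy1i] at ha; exact CubeF.noConfusion ha
    have hbi : b ≠ i := by rintro rfl; rw [hy1i] at hb; exact CubeF.noConfusion hb
    have h0 : Degen y0 := ⟨a, b, hab, by rw [hy0ne a hai, ← hy1ne a hai]; exact ha,
      by rw [hy0ne b hbi, ← hy1ne b hbi]; exact hb⟩
    rw [csFun, csFun,
      if_pos (show ∃ i j : Fin n, i < j ∧ y1 i = CubeF.zero ∧ y1 j = CubeF.mid
        from ⟨a, b, hab, ha, hb⟩),
      if_pos (show ∃ i j : Fin n, i < j ∧ y0 i = CubeF.zero ∧ y0 j = CubeF.mid from h0)]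
  · -- y1 nondegenerate
    have hli : l ≠ i := by rintro rfl; rw [hl0] at hi; exact CubeF.noConfusion hi
    have hji : j = i := by
      by_contra hji
      exact h1 ⟨l, j, hlj, by rw [hy1ne l hli]; exact hl0, by rw [hy1ne j hji]; exact hjm⟩
    subst hji
    -- so l < i and x l = zero
    have h0 : ¬ Degen y0 := by
      rintro ⟨a, b, hab, ha, hb⟩
      have hbi : b ≠ j := by rintro rfl; rw [hy0i] at hb; exact CubeF.noConfusion hb
      by_cases hai : a = j
      · subst hai
        exact h1 ⟨l, b, lt_trans hlj hab, by rw [hy1ne l hli]; exact hl0,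
          by rw [hy1ne b hbi, ← hy0ne b hbi]; exact hb⟩
      · exact h1 ⟨a, b, hab, by rw [hy1ne a hai, ← hy0ne a hai]; exact ha,
          by rw [hy1ne b hbi, ← hy0ne b hbi]; exact hb⟩
    rw [csFun, csFun,
      if_neg (show ¬∃ i j : Fin n, i < j ∧ y1 i = CubeF.zero ∧ y1 j = CubeF.mid from h1),
      if_neg (show ¬∃ i j : Fin n, i < j ∧ y0 i = CubeF.zero ∧ y0 j = CubeF.mid from h0)]
    -- show the csSets agree
    congr 1
    have hmideq : (Finset.univ.filter fun k => y1 k = CubeF.mid) =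
        (Finset.univ.filter fun k => y0 k = CubeF.mid) := by
      apply Finset.filter_congr
      intro k _
      by_cases hk : k = j
      · subst hk; rw [hy1i, hy0i]; simp
      · rw [hy1ne k hk, hy0ne k hk]
    have hple : (pIdx y1 : ℕ) ≤ (l : ℕ) := by
      by_contra hc
      exact pIdx_spec1 y1 l (by omega) (by rw [hy1ne l hli]; exact hl0)
    have hpeq : pIdx y0 = pIdx y1 := by
      apply pIdx_eq
      · intro a ha
        have hai : a ≠ j := by
          intro h; apply absurd (h ▸ ha) (by push_neg; exact le_trans hple (le_of_lt hlj))
        rw [hy0ne a hai, ← hy1ne a hai]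
        exact pIdx_spec1 y1 a ha
      · intro h
        have hne : (⟨(pIdx y1 : ℕ), h⟩ : Fin n) ≠ j := by
          intro hc
          have : (pIdx y1 : ℕ) = (j : ℕ) := congrArg Fin.val hc
          omega
        rw [hy0ne _ hne, ← hy1ne _ hne]
        exact pIdx_spec2 y1 h
    unfold csSet
    rw [hmideq, hpeq]

end CartanSerre
namespace CartanSerre

open CubeF Finsupp

lemma nondeg_mid_lt_pIdx {n : ℕ} {x : CubeB n} (h : ¬ Degen x) {i : Fin n}
    (hi : x i = CubeF.mid) : (i : ℕ) < (pIdx x : ℕ) := by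
  by_contra hc
  push_neg at hc
  have hlt : (pIdx x : ℕ) < n := lt_of_le_of_lt hc i.isLt
  have hz := pIdx_spec2 x hlt
  have hne : ((pIdx x : ℕ) : ℕ) ≠ (i : ℕ) := by
    intro hcc
    rw [show (⟨(pIdx x : ℕ), hlt⟩ : Fin n) = i from Fin.ext hcc, hi] at hz
    exact CubeF.noConfusion hz
  exact h ⟨⟨(pIdx x : ℕ), hlt⟩, i, by rw [Fin.lt_def]; exact lt_of_le_of_ne hc hne, hz, hi⟩

lemma pIdx_not_mem_image {n : ℕ} {x : CubeB n} (h : ¬ Degen x) :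
    pIdx x ∉ (Finset.univ.filter fun i => x i = CubeF.mid).image Fin.castSucc := by
  rw [Finset.mem_image]
  rintro ⟨j, hj, hje⟩
  rw [Finset.mem_filter] at hj
  have := nondeg_mid_lt_pIdx h hj.2
  have : (Fin.castSucc j : ℕ) = (pIdx x : ℕ) := congrArg Fin.val hje
  simp only [Fin.coe_castSucc] at this
  omega

lemma csFun_update_one {n : ℕ} {x : CubeB n} (h : ¬ Degen x) {i : Fin n}
    (hi : x i = CubeF.mid) :
    csFun n (Function.update x i CubeF.one) =
      Finsupp.single ((csSet x).erase (Fin.castSucc i)) 1 := by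
  set y := Function.update x i CubeF.one with hy
  have hyne : ∀ a : Fin n, a ≠ i → y a = x a := fun a ha => Function.update_of_ne ha _ x
  have hyi : y i = CubeF.one := Function.update_self i _ x
  have hnd : ¬ ∃ a b : Fin n, a < b ∧ y a = CubeF.zero ∧ y b = CubeF.mid := by
    rintro ⟨a, b, hab, ha, hb⟩
    have hai : a ≠ i := by rintro rfl; rw [hyi] at ha; exact CubeF.noConfusion ha
    have hbi : b ≠ i := by rintro rfl; rw [hyi] at hb; exact CubeF.noConfusion hb
    exact h ⟨a, b, hab, by rwa [hyne a hai] at ha, by rwa [hyne b hbi] at hb⟩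
  rw [csFun, if_neg hnd]
  congr 1
  have hmid : (Finset.univ.filter fun k => y k = CubeF.mid) =
      (Finset.univ.filter fun k => x k = CubeF.mid).erase i := by
    ext k
    simp only [Finset.mem_filter, Finset.mem_erase, Finset.mem_univ, true_and]
    by_cases hk : k = i
    · subst hk; rw [hyi]; simp
    · rw [hyne k hk]; simp [hk]
  have hilt := nondeg_mid_lt_pIdx h hi
  have hp : pIdx y = pIdx x := by
    apply pIdx_eq
    · intro a ha
      by_cases hai : a = i
      · subst hai; rw [hyi]; simp
      · rw [hyne a hai]; exact pIdx_spec1 x a ha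
    · intro hlt
      have hne : (⟨(pIdx x : ℕ), hlt⟩ : Fin n) ≠ i := by
        intro hc
        have : (pIdx x : ℕ) = (i : ℕ) := congrArg Fin.val hc
        omega
      rw [hyne _ hne]
      exact pIdx_spec2 x hlt
  have hip : Fin.castSucc i ≠ pIdx x := by
    intro hc
    have : (i : ℕ) = (pIdx x : ℕ) := by
      simpa using congrArg Fin.val hc
    omega
  rw [csSet, csSet, hmid, hp, Finset.image_erase (Fin.castSucc_injective n),
    Finset.erase_insert_of_ne hip.symm]

lemma csFun_update_zero_ne {n : ℕ} (x : CubeB n) {i j : Fin n} (hij : i < j)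
    (hjm : x j = CubeF.mid) :
    csFun n (Function.update x i CubeF.zero) = 0 := by
  rw [csFun, if_pos]
  exact ⟨i, j, hij, Function.update_self i _ x,
    by rw [Function.update_of_ne (ne_of_gt hij)]; exact hjm⟩

lemma csFun_update_zero_max {n : ℕ} {x : CubeB n} (h : ¬ Degen x) {q : Fin n}
    (hq : x q = CubeF.mid) (hmax : ∀ j : Fin n, x j = CubeF.mid → j ≤ q) :
    csFun n (Function.update x q CubeF.zero) =
      Finsupp.single ((csSet x).erase (pIdx x)) 1 := by
  set y := Function.update x q CubeF.zero with hy
  have hyne : ∀ a : Fin n, a ≠ q → y a = x a := fun a ha => Function.update_of_ne ha _ x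
  have hyq : y q = CubeF.zero := Function.update_self q _ x
  have hnd : ¬ ∃ a b : Fin n, a < b ∧ y a = CubeF.zero ∧ y b = CubeF.mid := by
    rintro ⟨a, b, hab, ha, hb⟩
    have hbq : b ≠ q := by rintro rfl; rw [hyq] at hb; exact CubeF.noConfusion hb
    have hbm : x b = CubeF.mid := by rwa [hyne b hbq] at hb
    by_cases haq : a = q
    · subst haq
      exact absurd (hmax b hbm) (not_le.mpr hab)
    · exact h ⟨a, b, hab, by rwa [hyne a haq] at ha, hbm⟩
  rw [csFun, if_neg hnd]
  congr 1
  have hmid : (Finset.univ.filter fun k => y k = CubeF.mid) =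
      (Finset.univ.filter fun k => x k = CubeF.mid).erase q := by
    ext k
    simp only [Finset.mem_filter, Finset.mem_erase, Finset.mem_univ, true_and]
    by_cases hk : k = q
    · subst hk; rw [hyq]; simp
    · rw [hyne k hk]; simp [hk]
  have hp : pIdx y = Fin.castSucc q := by
    apply pIdx_eq
    · intro a ha
      simp only [Fin.coe_castSucc] at ha
      have haq : a ≠ q := by intro hc; subst hc; omega
      rw [hyne a haq]
      intro hz
      exact h ⟨a, q, by rwa [Fin.lt_def], hz, hq⟩
    · intro hlt
      have : (⟨((Fin.castSucc q : Fin (n+1)) : ℕ), hlt⟩ : Fin n) = q := by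
        apply Fin.ext; simp
      rw [this]
      exact hyq
  rw [csSet, csSet, hmid, hp, Finset.image_erase (Fin.castSucc_injective n),
    Finset.insert_erase (Finset.mem_image_of_mem _ (by simp [hq])),
    Finset.erase_insert (pIdx_not_mem_image h)]

end CartanSerre
open CartanSerre in
/-- The Cartan–Serre map `CS : C(□^n) → C(Δ^n)` is a chain map:
for every `n ≥ 0` and every basis element `x` of `C(□^n)`, `∂(CS(x)) = CS(∂x)`. -/
theorem cartanSerre_is_chain_map (n : ℕ) (x : CubeB n) :
    simpBd n (csFun n x) = csL n (cubeBdFun n x) := by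
  classical
  rw [csL_cubeBd]
  by_cases hD : Degen x
  · have h0 : csFun n x = 0 := by
      rw [csFun,
        if_pos (show ∃ i j : Fin n, i < j ∧ x i = CubeF.zero ∧ x j = CubeF.mid from hD)]
    rw [h0, map_zero]
    symm
    refine Finset.sum_eq_zero fun i hi => ?_
    rw [Finset.mem_filter] at hi
    rw [degen_key x i hi.2 hD, sub_self, smul_zero]
  · have hx : csFun n x = Finsupp.single (csSet x) 1 := by
      rw [csFun,
        if_neg (show ¬∃ i j : Fin n, i < j ∧ x i = CubeF.zero ∧ x j = CubeF.mid from hD)]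
    rw [hx, simpBd_single]
    set M := (Finset.univ.filter fun i => x i = CubeF.mid) with hM
    set p := pIdx x with hp
    set T := M.image Fin.castSucc with hT
    have hpT : p ∉ T := pIdx_not_mem_image hD
    have hSeq : csSet x = insert p T := rfl
    have hcardT : T.card = M.card := Finset.card_image_of_injective _ (Fin.castSucc_injective n)
    have hcardS : (csSet x).card = M.card + 1 := by
      rw [hSeq, Finset.card_insert_of_notMem hpT, hcardT]
    have hmidlt : ∀ i : Fin n, i ∈ M → (i : ℕ) < (p : ℕ) := by
      intro i hi
      rw [hM, Finset.mem_filter] at hi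
      exact nondeg_mid_lt_pIdx hD hi.2
    rcases M.eq_empty_or_nonempty with hMe | hMne
    · rw [hMe, Finset.sum_empty, simpBdFun, if_neg]
      rw [hcardS, hMe]
      simp
    · set q := M.max' hMne with hq
      have hqM : q ∈ M := M.max'_mem hMne
      have hqmid : x q = CubeF.mid := (Finset.mem_filter.mp hqM).2
      have hqmax : ∀ j : Fin n, x j = CubeF.mid → j ≤ q := fun j hj =>
        M.le_max' j (by rw [hM, Finset.mem_filter]; exact ⟨Finset.mem_univ j, hj⟩)
      -- sign exponent identities
      have hEq : (Finset.univ.filter fun j => j < q ∧ x j = CubeF.mid).card = M.card - 1 := by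
        have : (Finset.univ.filter fun j => j < q ∧ x j = CubeF.mid) = M.erase q := by
          ext j
          rw [Finset.mem_filter, Finset.mem_erase, hM, Finset.mem_filter]
          constructor
          · rintro ⟨_, hjq, hjm⟩
            exact ⟨ne_of_lt hjq, Finset.mem_univ j, hjm⟩
          · rintro ⟨hne, _, hjm⟩
            exact ⟨Finset.mem_univ j, lt_of_le_of_ne (hqmax j hjm) hne, hjm⟩
        rw [this, Finset.card_erase_of_mem hqM]
      -- rewrite RHS
      have hRHS : ∑ i ∈ M,
          ((-1 : ℤ) ^ (Finset.univ.filter fun j => j < i ∧ x j = CubeF.mid).card) •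
            (csFun n (Function.update x i CubeF.one) - csFun n (Function.update x i CubeF.zero))
          = (∑ i ∈ M, ((-1 : ℤ) ^ (Finset.univ.filter fun j => j < i ∧ x j = CubeF.mid).card) •
              Finsupp.single ((csSet x).erase (Fin.castSucc i)) 1)
            - ((-1 : ℤ) ^ (M.card - 1)) • Finsupp.single ((csSet x).erase p) 1 := by
        have hstep : ∀ i ∈ M,
            ((-1 : ℤ) ^ (Finset.univ.filter fun j => j < i ∧ x j = CubeF.mid).card) •
              (csFun n (Function.update x i CubeF.one) -
                csFun n (Function.update x i CubeF.zero))
            = ((-1 : ℤ) ^ (Finset.univ.filter fun j => j < i ∧ x j = CubeF.mid).card) •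
                Finsupp.single ((csSet x).erase (Fin.castSucc i)) 1
              - (if i = q then
                  ((-1 : ℤ) ^ (M.card - 1)) • Finsupp.single ((csSet x).erase p) 1 else 0) := by
          intro i hi
          have himid : x i = CubeF.mid := (Finset.mem_filter.mp hi).2
          rw [csFun_update_one hD himid, smul_sub]
          congr 1
          by_cases hiq : i = q
          · subst hiq
            rw [if_pos rfl, csFun_update_zero_max hD himid hqmax, hEq]
          · rw [if_neg hiq]
            have hilt : i < q := lt_of_le_of_ne (hqmax i himid) hiq
            rw [csFun_update_zero_ne x hilt hqmid, smul_zero]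
        rw [Finset.sum_congr rfl hstep, Finset.sum_sub_distrib,
          Finset.sum_ite_eq' M q
            (fun _ => ((-1 : ℤ) ^ (M.card - 1)) • Finsupp.single ((csSet x).erase p) 1),
          if_pos hqM]
      rw [hRHS]
      -- rewrite LHS
      rw [simpBdFun, if_pos (by rw [hcardS]; have := Finset.card_pos.mpr hMne; omega)]
      rw [hSeq, Finset.sum_insert hpT,
        Finset.sum_image (fun a _ b _ h => Fin.castSucc_injective n h)]
      rw [← hSeq]
      -- sign at p
      have hfp : ((csSet x).filter fun w => w < p).card = M.card := by
        have : ((csSet x).filter fun w => w < p) = T := by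
          ext w
          rw [Finset.mem_filter, hSeq, Finset.mem_insert]
          constructor
          · rintro ⟨hw | hw, hlt⟩
            · exact absurd hlt (by rw [hw]; exact lt_irrefl p)
            · exact hw
          · intro hw
            refine ⟨Or.inr hw, ?_⟩
            rw [hT, Finset.mem_image] at hw
            obtain ⟨j, hj, rfl⟩ := hw
            rw [Fin.lt_def, Fin.coe_castSucc]
            exact hmidlt j hj
        rw [this, hcardT]
      -- signs at castSucc i
      have hfi : ∀ i ∈ M, ((csSet x).filter fun w => w < Fin.castSucc i).card
          = (Finset.univ.filter fun j => j < i ∧ x j = CubeF.mid).card := by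
        intro i hi
        have hset : ((csSet x).filter fun w => w < Fin.castSucc i)
            = (M.filter fun j => j < i).image Fin.castSucc := by
          ext w
          rw [Finset.mem_filter, hSeq, Finset.mem_insert, Finset.mem_image]
          constructor
          · rintro ⟨hw | hw, hlt⟩
            · exfalso
              rw [hw, Fin.lt_def, Fin.coe_castSucc] at hlt
              exact absurd (hmidlt i hi) (by omega)
            · obtain ⟨j, hj, rfl⟩ := hw
              exact Finset.mem_image_of_mem _
                (Finset.mem_filter.mpr ⟨hj, Fin.castSucc_lt_castSucc_iff.mp hlt⟩)
          · intro hw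
            obtain ⟨j, hj, rfl⟩ := Finset.mem_image.mp hw
            rw [Finset.mem_filter] at hj
            exact ⟨Or.inr ⟨j, hj.1, rfl⟩,
              Fin.castSucc_lt_castSucc_iff.mpr hj.2⟩
        rw [hset, Finset.card_image_of_injective _ (Fin.castSucc_injective n)]
        congr 1
        ext j
        simp only [hM, Finset.mem_filter, Finset.mem_univ, true_and]
        tauto
      rw [hfp, Finset.sum_congr rfl (fun i hi => by rw [hfi i hi])]
      -- conclude
      have hMc : 1 ≤ M.card := Finset.card_pos.mpr hMne
      have hsign : ((-1 : ℤ) ^ M.card) = -((-1 : ℤ) ^ (M.card - 1)) := by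
        conv_lhs => rw [show M.card = (M.card - 1) + 1 by omega]
        rw [pow_succ]
        ring
      rw [hsign, neg_smul, sub_eq_add_neg]
      exact add_comm _ _
end

section
/- Let x, y, z be basis elements of C(□^n) with x ≤ z and y ≤ z in the componentwise partial order. Then either x ∗ y = 0 or every basis-element summand of x ∗ y is ≤ z. -/
open CartanSerre in
/-- If `x ≤ z` and `y ≤ z` in the componentwise partial order on the
basis of `C(□^n)`, then either `x ∗ y = 0` or every basis-element summand of `x ∗ y`
is `≤ z`. -/
theorem cubeJoin_le_of_le (n : ℕ) (x y z : CubeB n) (hx : cubeLe x z) (hy : cubeLe y z) :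
    cubeJoinFun n x y = 0 ∨ ∀ w ∈ (cubeJoinFun n x y).support, cubeLe w z := by
  right
  intro w hw
  rw [Finsupp.mem_support_iff] at hw
  unfold cubeJoinFun at hw
  rw [Finsupp.smul_apply, Finsupp.finset_sum_apply] at hw
  have h1 : ∃ l : Fin n,
      (((if (∀ j, j < l → y j ≠ CubeF.mid) ∧ (∀ j, l < j → x j ≠ CubeF.mid) then (1 : ℤ) else 0) *
          joinF (x l) (y l)) •
        Finsupp.single (fun j => if j < l then x j else if j = l then CubeF.mid else y j)
          (1 : ℤ)) w ≠ 0 := by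
    by_contra h
    push_neg at h
    apply hw
    rw [Finset.sum_congr rfl fun l _ => h l]
    simp
  obtain ⟨l, hl⟩ := h1
  rw [Finsupp.smul_apply, Finsupp.single_apply] at hl
  have hne : joinF (x l) (y l) ≠ 0 := by
    intro h0; apply hl; rw [h0]; ring_nf
  have hweq : w = fun j => if j < l then x j else if j = l then CubeF.mid else y j := by
    by_contra h
    apply hl
    rw [if_neg (fun h' : (fun j => if j < l then x j else if j = l then CubeF.mid else y j) = w
      => h h'.symm)]
    simp
  have hzl : cellVal CubeF.mid ≤ cellVal (z l) := by
    cases hxl : x l <;> cases hyl : y l <;> rw [hxl, hyl] at hne <;> simp [joinF] at hne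
    · have := hy l
      rw [hyl] at this
      simp only [cellVal] at this ⊢
      omega
    · have := hx l
      rw [hxl] at this
      simp only [cellVal] at this ⊢
      omega
  intro i
  rw [hweq]
  by_cases h1 : i < l
  · simpa [h1] using hx i
  · by_cases h2 : i = l
    · subst h2; simpa [h1] using hzl
    · simpa [h1, h2] using hy i
end
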